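/- arXiv:2412.18539 — 2 statements merged into one kernel-verified Lean document; each statement's English description precedes it below -/
import Mathlib

section
/- (Donsker–Varadhan variational formula) For any probability measure π on Θ and any measurable function h with ∫ e^h dπ < ∞, one has log ∫ e^h dπ = sup over probability measures ρ of [∫ h dρ − KL(ρ‖π)], with the convention ∞ − ∞ = ∞. Moreover, when h is bounded above on the support of π, the supremum is attained at the Gibbs measure π_h(dθ) = e^{h(θ)} π(dθ) / ∫ e^h dπ. -/
open MeasureTheory

/-- Kullback-Leibler divergence between measures, `KL(ρ‖π) = ∫ log(dρ/dπ) dρ`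
(meaningful when `ρ ≪ π` and the log-likelihood ratio is `ρ`-integrable). -/
noncomputable def klM {Θ : Type*} [MeasurableSpace Θ] (ρ π : Measure Θ) : ℝ :=
  ∫ θ, MeasureTheory.llr ρ π θ ∂ρ

/-- `-t e^t ≤ 1` for all real `t`. -/
lemma neg_mul_exp_le_one (t : ℝ) : (-t) * Real.exp t ≤ 1 := by
  have h1 : -t ≤ Real.exp (-t) - 1 := by linarith [Real.add_one_le_exp (-t)]
  have h2 : Real.exp (-t) * Real.exp t = 1 := by
    rw [← Real.exp_add]; simp
  have h3 := mul_le_mul_of_nonneg_right h1 (Real.exp_pos t).le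
  nlinarith [Real.exp_pos t]

lemma self_le_exp (t : ℝ) : t ≤ Real.exp t := by
  linarith [Real.add_one_le_exp t]

/-- Nonnegativity of the KL divergence. -/
lemma kl_nonneg' {α : Type*} [MeasurableSpace α] {μ ν : Measure α}
    [IsProbabilityMeasure μ] [IsProbabilityMeasure ν] (hμν : μ ≪ ν)
    (h_int : Integrable (llr μ ν) μ) : 0 ≤ ∫ x, llr μ ν x ∂μ := by
  have hmain : ∀ᵐ x ∂μ, - llr μ ν x ≤ (ν.rnDeriv μ x).toReal - 1 := by
    filter_upwards [neg_llr hμν, Measure.inv_rnDeriv hμν,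
      hμν.ae_le (Measure.rnDeriv_lt_top μ ν), Measure.rnDeriv_lt_top ν μ]
      with x h1 h2 h3 h4
    have hpos : 0 < ν.rnDeriv μ x := by
      rw [← h2]
      simp only [Pi.inv_apply, ENNReal.inv_pos]
      exact h3.ne
    have htr : 0 < (ν.rnDeriv μ x).toReal := ENNReal.toReal_pos hpos.ne' h4.ne
    have hlog := Real.log_le_sub_one_of_pos htr
    have hx : - llr μ ν x = llr ν μ x := h1
    rw [hx]
    exact hlog
  have hint2 : Integrable (fun x => (ν.rnDeriv μ x).toReal - 1) μ :=
    Measure.integrable_toReal_rnDeriv.sub (integrable_const 1)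
  have hle : ∫ x, (-(llr μ ν x)) ∂μ ≤ ∫ x, ((ν.rnDeriv μ x).toReal - 1) ∂μ :=
    integral_mono_ae h_int.neg hint2 hmain
  rw [integral_neg] at hle
  rw [integral_sub Measure.integrable_toReal_rnDeriv (integrable_const 1)] at hle
  have h1 : ∫ x, (ν.rnDeriv μ x).toReal ∂μ ≤ 1 := by
    have := Measure.setIntegral_toReal_rnDeriv_le (μ := ν) (ν := μ) (s := Set.univ)
      (by simp [measure_ne_top])
    simpa using this
  simp only [integral_const, measure_univ, probReal_univ, ENNReal.toReal_one, smul_eq_mul, one_mul] at hle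
  linarith

/-- Upper bound: Gibbs' inequality. -/
lemma dv_le {Θ : Type*} [MeasurableSpace Θ] (π : Measure Θ) [IsProbabilityMeasure π]
    (h : Θ → ℝ) (hint : Integrable (fun θ => Real.exp (h θ)) π)
    (ρ : Measure Θ) [IsProbabilityMeasure ρ] (hρπ : ρ ≪ π)
    (h_illr : Integrable (llr ρ π) ρ) (h_ih : Integrable h ρ) :
    (∫ θ, h θ ∂ρ) - klM ρ π ≤ Real.log (∫ θ, Real.exp (h θ) ∂π) := by
  have hP : IsProbabilityMeasure (π.tilted h) := isProbabilityMeasure_tilted hint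
  have hρt : ρ ≪ π.tilted h := hρπ.trans (absolutelyContinuous_tilted hint)
  have h_int_t : Integrable (llr ρ (π.tilted h)) ρ :=
    integrable_llr_tilted_right hρπ h_ih h_illr hint
  have h0 : 0 ≤ ∫ x, llr ρ (π.tilted h) x ∂ρ := kl_nonneg' hρt h_int_t
  rw [integral_llr_tilted_right hρπ h_ih hint h_illr] at h0
  unfold klM
  linarith

/-- Transfer of integrability to a tilted measure. -/
lemma integrable_tilted_of_integrable_mul {Θ : Type*} [MeasurableSpace Θ]
    {π : Measure Θ} {f g : Θ → ℝ} (hg : Measurable g)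
    (hf : AEStronglyMeasurable f π)
    (hI : Integrable (fun x => f x * Real.exp (g x)) π) :
    Integrable f (π.tilted g) := by
  rw [Measure.tilted, integrable_withDensity_iff
    (by measurability) (Filter.Eventually.of_forall fun x => ENNReal.ofReal_lt_top)]
  have heq : (fun x => f x * (ENNReal.ofReal
      (Real.exp (g x) / ∫ x, Real.exp (g x) ∂π)).toReal)
      = fun x => (f x * Real.exp (g x)) / ∫ x, Real.exp (g x) ∂π := by
    funext x
    rw [ENNReal.toReal_ofReal (div_nonneg (Real.exp_nonneg _)
      (integral_nonneg fun x => Real.exp_nonneg _)), mul_div_assoc]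
  rw [heq]
  exact hI.div_const _

/-- The log-likelihood ratio of a tilted measure with respect to the base measure. -/
lemma llr_tilted_self {Θ : Type*} [MeasurableSpace Θ] (π : Measure Θ)
    [IsProbabilityMeasure π] {g : Θ → ℝ} (hg : Measurable g)
    (hgi : Integrable (fun x => Real.exp (g x)) π) :
    llr (π.tilted g) π =ᵐ[π] fun x => g x - Real.log (∫ x, Real.exp (g x) ∂π) := by
  have h1 := llr_tilted_left (μ := π) (ν := π) Measure.AbsolutelyContinuous.rfl hgi
    hg.aemeasurable
  have h2 : ∀ᵐ x ∂π, llr π π x = 0 := by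
    filter_upwards [Measure.rnDeriv_self π] with x hx
    rw [llr, hx]
    simp
  filter_upwards [h1, h2] with x hx1 hx2
  rw [hx1, hx2, add_zero]

/-- Value of the Donsker–Varadhan functional at a tilted (Gibbs-type) measure. -/
lemma gibbs_val {Θ : Type*} [MeasurableSpace Θ] (π : Measure Θ) [IsProbabilityMeasure π]
    (h g : Θ → ℝ) (hh : Measurable h) (hg : Measurable g)
    (hgi : Integrable (fun x => Real.exp (g x)) π)
    (hgg : Integrable (fun x => g x * Real.exp (g x)) π)
    (hhg : Integrable (fun x => h x * Real.exp (g x)) π) :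
    IsProbabilityMeasure (π.tilted g) ∧ (π.tilted g) ≪ π ∧
    Integrable (llr (π.tilted g) π) (π.tilted g) ∧ Integrable h (π.tilted g) ∧
    (∫ θ, h θ ∂(π.tilted g)) - klM (π.tilted g) π
      = (∫ θ, (h θ - g θ) ∂(π.tilted g)) + Real.log (∫ x, Real.exp (g x) ∂π) := by
  have hP : IsProbabilityMeasure (π.tilted g) := isProbabilityMeasure_tilted hgi
  have hac : (π.tilted g) ≪ π := tilted_absolutelyContinuous π g
  have hgint : Integrable g (π.tilted g) :=
    integrable_tilted_of_integrable_mul hg hg.aestronglyMeasurable hgg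
  have hhint : Integrable h (π.tilted g) :=
    integrable_tilted_of_integrable_mul hg hh.aestronglyMeasurable hhg
  have hllr : llr (π.tilted g) π =ᵐ[π.tilted g]
      fun x => g x - Real.log (∫ x, Real.exp (g x) ∂π) :=
    hac.ae_le (llr_tilted_self π hg hgi)
  have hllr_int : Integrable (llr (π.tilted g) π) (π.tilted g) :=
    (hgint.sub (integrable_const _)).congr hllr.symm
  refine ⟨hP, hac, hllr_int, hhint, ?_⟩
  have hkl : klM (π.tilted g) π
      = (∫ θ, g θ ∂(π.tilted g)) - Real.log (∫ x, Real.exp (g x) ∂π) := by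
    unfold klM
    rw [integral_congr_ae hllr, integral_sub hgint (integrable_const _)]
    simp
  rw [hkl, integral_sub hhint hgint]
  ring

/-- Donsker–Varadhan variational formula:
`log ∫ e^h dπ = sup_ρ [∫ h dρ − KL(ρ‖π)]`, the supremum being over probability
measures `ρ ≪ π` for which both terms are finite; moreover when `h` is bounded
above on the support of `π`, the supremum is attained at the Gibbs measure
`π_h(dθ) = e^{h(θ)} π(dθ) / ∫ e^h dπ`. -/
theorem donsker_varadhan {Θ : Type*} [MeasurableSpace Θ]
    (π : Measure Θ) [IsProbabilityMeasure π] (h : Θ → ℝ) (hmeas : Measurable h)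
    (hint : Integrable (fun θ => Real.exp (h θ)) π) :
    Real.log (∫ θ, Real.exp (h θ) ∂π)
      = sSup {x : ℝ | ∃ ρ : Measure Θ, IsProbabilityMeasure ρ ∧ ρ ≪ π ∧
          Integrable (MeasureTheory.llr ρ π) ρ ∧ Integrable h ρ ∧
          x = (∫ θ, h θ ∂ρ) - klM ρ π} ∧
    ∀ C : ℝ, (∀ᵐ θ ∂π, h θ ≤ C) →
      (∫ θ, h θ ∂(π.withDensity fun θ =>
            ENNReal.ofReal (Real.exp (h θ) / ∫ θ', Real.exp (h θ') ∂π)))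
        - klM (π.withDensity fun θ =>
            ENNReal.ofReal (Real.exp (h θ) / ∫ θ', Real.exp (h θ') ∂π)) π
      = Real.log (∫ θ, Real.exp (h θ) ∂π) := by
  have hZ : 0 < ∫ θ, Real.exp (h θ) ∂π := integral_exp_pos hint
  set S : Set ℝ := {x : ℝ | ∃ ρ : Measure Θ, IsProbabilityMeasure ρ ∧ ρ ≪ π ∧
          Integrable (MeasureTheory.llr ρ π) ρ ∧ Integrable h ρ ∧
          x = (∫ θ, h θ ∂ρ) - klM ρ π} with hS
  have hub : ∀ x ∈ S, x ≤ Real.log (∫ θ, Real.exp (h θ) ∂π) := by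
    rintro x ⟨ρ, hρ, hac, hillr, hih, rfl⟩
    exact dv_le π h hint ρ hac hillr hih
  -- the truncated functions
  set g : ℕ → Θ → ℝ := fun n x => min (h x) n with hgdef
  have hgm : ∀ n, Measurable (g n) := fun n => hmeas.min measurable_const
  have hgle : ∀ n x, g n x ≤ h x := fun n x => min_le_left _ _
  have hgi : ∀ n, Integrable (fun x => Real.exp (g n x)) π := by
    intro n
    refine hint.mono' ((Real.measurable_exp.comp (hgm n)).aestronglyMeasurable)
      (Filter.Eventually.of_forall fun x => ?_)
    rw [Real.norm_eq_abs, abs_of_pos (Real.exp_pos _)]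
    exact Real.exp_le_exp.2 (hgle n x)
  have hBint : Integrable (fun x => (1 : ℝ) + Real.exp (h x)) π :=
    (integrable_const 1).add hint
  have hhg : ∀ n, Integrable (fun x => h x * Real.exp (g n x)) π := by
    intro n
    refine (hBint.const_mul (Real.exp n)).mono'
      ((hmeas.mul (Real.measurable_exp.comp (hgm n))).aestronglyMeasurable)
      (Filter.Eventually.of_forall fun x => ?_)
    rw [Real.norm_eq_abs, abs_mul, abs_of_pos (Real.exp_pos _)]
    rcases le_or_gt 0 (h x) with hx | hx
    · have h1 : |h x| ≤ Real.exp (h x) := by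
        rw [abs_of_nonneg hx]; exact self_le_exp _
      have h2 : Real.exp (g n x) ≤ Real.exp n := Real.exp_le_exp.2 (min_le_right _ _)
      nlinarith [Real.exp_pos (h x), Real.exp_pos (n : ℝ), Real.exp_nonneg (g n x),
        abs_nonneg (h x)]
    · have hgx : g n x = h x := min_eq_left (hx.le.trans (Nat.cast_nonneg n))
      have h1 : |h x| * Real.exp (g n x) ≤ 1 := by
        rw [hgx, abs_of_neg hx]
        exact neg_mul_exp_le_one (h x)
      have h2 : (1 : ℝ) ≤ Real.exp n := Real.one_le_exp (Nat.cast_nonneg n)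
      nlinarith [Real.exp_pos (h x)]
  have hgg : ∀ n, Integrable (fun x => g n x * Real.exp (g n x)) π := by
    intro n
    refine (hBint.const_mul (Real.exp n + n)).mono'
      (((hgm n).mul (Real.measurable_exp.comp (hgm n))).aestronglyMeasurable)
      (Filter.Eventually.of_forall fun x => ?_)
    rw [Real.norm_eq_abs, abs_mul, abs_of_pos (Real.exp_pos _)]
    rcases le_or_gt 0 (g n x) with hx | hx
    · have h1 : |g n x| ≤ (n : ℝ) := by
        rw [abs_of_nonneg hx]; exact min_le_right _ _
      have h2 : Real.exp (g n x) ≤ Real.exp (h x) := Real.exp_le_exp.2 (hgle n x)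
      nlinarith [Real.exp_pos (h x), Real.exp_pos (n : ℝ), Real.exp_nonneg (g n x),
        Nat.cast_nonneg (α := ℝ) n]
    · have h1 : |g n x| * Real.exp (g n x) ≤ 1 := by
        rw [abs_of_neg hx]
        exact neg_mul_exp_le_one (g n x)
      have h2 : (1 : ℝ) ≤ Real.exp n := Real.one_le_exp (Nat.cast_nonneg n)
      nlinarith [Real.exp_pos (h x), Nat.cast_nonneg (α := ℝ) n]
  -- membership of the truncated Gibbs measures
  have hmem : ∀ n : ℕ, ∃ x ∈ S, Real.log (∫ x, Real.exp (g n x) ∂π) ≤ x := by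
    intro n
    obtain ⟨hP, hac, hillr, hih, hval⟩ := gibbs_val π h (g n) hmeas (hgm n)
      (hgi n) (hgg n) (hhg n)
    refine ⟨(∫ θ, h θ ∂(π.tilted (g n))) - klM (π.tilted (g n)) π,
      ⟨π.tilted (g n), hP, hac, hillr, hih, rfl⟩, ?_⟩
    rw [hval]
    have hnn : 0 ≤ ∫ θ, (h θ - g n θ) ∂(π.tilted (g n)) :=
      integral_nonneg fun x => by simpa using hgle n x
    linarith
  have hbdd : BddAbove S := ⟨Real.log (∫ θ, Real.exp (h θ) ∂π), hub⟩
  have hne : S.Nonempty := by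
    obtain ⟨x, hx, _⟩ := hmem 0
    exact ⟨x, hx⟩
  constructor
  · refine le_antisymm ?_ (csSup_le hne hub)
    -- log Z_n → log Z and log Z_n ≤ sSup S
    have htend : Filter.Tendsto (fun n : ℕ => ∫ x, Real.exp (g n x) ∂π)
        Filter.atTop (nhds (∫ θ, Real.exp (h θ) ∂π)) := by
      refine tendsto_integral_of_dominated_convergence (fun x => Real.exp (h x))
        (fun n => (Real.measurable_exp.comp (hgm n)).aestronglyMeasurable) hint
        (fun n => Filter.Eventually.of_forall fun x => ?_)
        (Filter.Eventually.of_forall fun x => ?_)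
      · rw [Real.norm_eq_abs, abs_of_pos (Real.exp_pos _)]
        exact Real.exp_le_exp.2 (hgle n x)
      · refine Filter.Tendsto.congr' ?_ tendsto_const_nhds
        filter_upwards [Filter.eventually_ge_atTop ⌈h x⌉₊] with n hn
        have : h x ≤ (n : ℝ) := (Nat.le_ceil (h x)).trans (Nat.cast_le.2 hn)
        simp [hgdef, min_eq_left this]
    have hlogtend : Filter.Tendsto (fun n : ℕ => Real.log (∫ x, Real.exp (g n x) ∂π))
        Filter.atTop (nhds (Real.log (∫ θ, Real.exp (h θ) ∂π))) :=
      ((Real.continuousAt_log hZ.ne').tendsto.comp htend)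
    refine le_of_tendsto' hlogtend fun n => ?_
    obtain ⟨x, hx, hle⟩ := hmem n
    exact hle.trans (le_csSup hbdd hx)
  · -- the Gibbs measure attains the supremum
    intro C hC
    have hwd : (π.withDensity fun θ =>
        ENNReal.ofReal (Real.exp (h θ) / ∫ θ', Real.exp (h θ') ∂π)) = π.tilted h := rfl
    have hhh : Integrable (fun x => h x * Real.exp (h x)) π := by
      refine (integrable_const (max 1 (|C| * Real.exp C))).mono'
        ((hmeas.mul (Real.measurable_exp.comp hmeas)).aestronglyMeasurable) ?_
      filter_upwards [hC] with x hx
      rw [Real.norm_eq_abs, abs_mul, abs_of_pos (Real.exp_pos _)]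
      rcases le_or_gt 0 (h x) with hx0 | hx0
      · refine le_trans ?_ (le_max_right _ _)
        have h1 : |h x| ≤ |C| := by
          rw [abs_of_nonneg hx0, abs_of_nonneg (hx0.trans hx)]; exact hx
        have h2 : Real.exp (h x) ≤ Real.exp C := Real.exp_le_exp.2 hx
        exact mul_le_mul h1 h2 (Real.exp_nonneg _) (abs_nonneg _)
      · refine le_trans ?_ (le_max_left _ _)
        rw [abs_of_neg hx0]
        exact neg_mul_exp_le_one (h x)
    obtain ⟨hP, hac, hillr, hih, hval⟩ := gibbs_val π h h hmeas hmeas hint hhh hhh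
    rw [hwd, hval]
    simp
end

section
/- In the Gaussian model P_θ = N(θ, v²I_d) with isotropic Gaussian prior π = N(0, σ²I_d), for all β ≥ 0: β E_{π_{−β}}[KL(P_{θ₀}‖P_θ)] = (β/v²)‖θ₀‖² / (2σ⁴((β/v²) + 1/σ²)²) + (β/v²)d / (2((β/v²) + 1/σ²)) ≤ d/2 + ‖θ₀‖²/(8σ²). -/
open MeasureTheory Real NNReal

section Aux

lemma gauss_i0 (s : ℝ) (hs : 0 < s) :
    ∫ x : ℝ, Real.exp (-(s/2) * x^2) = Real.sqrt (2*Real.pi/s) := by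
  rw [integral_gaussian]; congr 1; field_simp

lemma gauss_integrable2 (s : ℝ) (hs : 0 < s) :
    Integrable (fun x : ℝ => x^2 * Real.exp (-(s/2) * x^2)) := by
  have h := integrable_rpow_mul_exp_neg_mul_sq (half_pos hs) (s := 2) (by norm_num)
  simpa only [show ((2:ℝ) = ((2:ℕ):ℝ)) by norm_num, Real.rpow_natCast] using h

lemma gauss_i1 (s : ℝ) : ∫ x : ℝ, x * Real.exp (-(s/2) * x^2) = 0 := by
  have h := integral_neg_eq_self (fun x : ℝ => x * Real.exp (-(s/2) * x^2)) (volume : Measure ℝ)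
  simp only [neg_sq, neg_mul] at h
  rw [integral_neg] at h
  simp only [neg_mul]
  linarith

lemma gauss_i2 (s : ℝ) (hs : 0 < s) :
    ∫ x : ℝ, x^2 * Real.exp (-(s/2) * x^2) = Real.sqrt (2*Real.pi/s) / s := by
  have habs : (fun x : ℝ => x^2 * Real.exp (-(s/2) * x^2))
      = fun x : ℝ => |x|^2 * Real.exp (-(s/2) * |x|^2) := by
    funext x; rw [sq_abs]
  rw [habs, integral_comp_abs (f := fun y : ℝ => y^2 * Real.exp (-(s/2) * y^2))]
  have h2 : ∫ x in Set.Ioi (0:ℝ), x^2 * Real.exp (-(s/2) * x^2)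
      = (s/2) ^ (-(3:ℝ)/2) * (1/2) * Real.Gamma (3/2) := by
    have h := integral_rpow_mul_exp_neg_mul_rpow (p := 2) (q := 2) (by norm_num) (by norm_num)
      (half_pos hs)
    simp only [show ((2:ℝ) = ((2:ℕ):ℝ)) by norm_num, Real.rpow_natCast] at h
    norm_num at h ⊢
    convert h using 2 <;> norm_num
  rw [h2]
  have hG : Real.Gamma (3/2) = Real.sqrt Real.pi / 2 := by
    rw [show (3:ℝ)/2 = 1/2 + 1 by norm_num, Real.Gamma_add_one (by norm_num),
      Real.Gamma_one_half_eq]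
    ring
  have hsq : Real.sqrt (2*Real.pi/s) = Real.sqrt Real.pi / Real.sqrt (s/2) := by
    rw [show 2*Real.pi/s = Real.pi/(s/2) by field_simp,
      Real.sqrt_div Real.pi_pos.le]
  rw [hG, hsq, show (-(3:ℝ)/2) = -(1/2 : ℝ) + (-1 : ℝ) by norm_num,
    Real.rpow_add (half_pos hs), Real.rpow_neg_one, Real.rpow_neg (half_pos hs).le,
    ← Real.sqrt_eq_rpow]
  have hX : Real.sqrt (s/2) ≠ 0 := (Real.sqrt_pos.mpr (half_pos hs)).ne'
  field_simp

/-- Shifted Gaussian: integral of the density. -/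
lemma gauss_shift_i0 (s m : ℝ) (hs : 0 < s) :
    ∫ x : ℝ, Real.exp (-(s/2) * (x - m)^2) = Real.sqrt (2*Real.pi/s) := by
  rw [integral_sub_right_eq_self (fun y : ℝ => Real.exp (-(s/2) * y^2)) m]
  exact gauss_i0 s hs

lemma gauss_shift_integrable0 (s m : ℝ) (hs : 0 < s) :
    Integrable (fun x : ℝ => Real.exp (-(s/2) * (x - m)^2)) :=
  (integrable_exp_neg_mul_sq (half_pos hs)).comp_sub_right m

lemma gauss_shift_integrable2 (s m t : ℝ) (hs : 0 < s) :
    Integrable (fun x : ℝ => (x - t)^2 * Real.exp (-(s/2) * (x - m)^2)) := by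
  have i0 : Integrable (fun x : ℝ => Real.exp (-(s/2) * x^2)) :=
    integrable_exp_neg_mul_sq (half_pos hs)
  have i1 : Integrable (fun x : ℝ => x * Real.exp (-(s/2) * x^2)) :=
    integrable_mul_exp_neg_mul_sq (half_pos hs)
  have i2 := gauss_integrable2 s hs
  have hf : Integrable (fun y : ℝ => (y + (m - t))^2 * Real.exp (-(s/2) * y^2)) := by
    have : (fun y : ℝ => (y + (m - t))^2 * Real.exp (-(s/2) * y^2))
        = fun y : ℝ => y^2 * Real.exp (-(s/2) * y^2)
          + ((2*(m-t)) * (y * Real.exp (-(s/2) * y^2)) + (m - t)^2 * Real.exp (-(s/2) * y^2)) := by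
      funext y; ring
    rw [this]
    exact i2.add ((i1.const_mul _).add (i0.const_mul _))
  have := hf.comp_sub_right m
  refine this.congr ?_
  filter_upwards with x
  ring_nf

/-- Shifted second moment around an arbitrary point. -/
lemma gauss_shift_i2 (s m t : ℝ) (hs : 0 < s) :
    ∫ x : ℝ, (x - t)^2 * Real.exp (-(s/2) * (x - m)^2)
      = ((m - t)^2 + 1/s) * Real.sqrt (2*Real.pi/s) := by
  have i0 : Integrable (fun x : ℝ => Real.exp (-(s/2) * x^2)) :=
    integrable_exp_neg_mul_sq (half_pos hs)
  have i1 : Integrable (fun x : ℝ => x * Real.exp (-(s/2) * x^2)) :=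
    integrable_mul_exp_neg_mul_sq (half_pos hs)
  have i2 := gauss_integrable2 s hs
  have hshift := integral_sub_right_eq_self
    (fun y : ℝ => (y + (m - t))^2 * Real.exp (-(s/2) * y^2)) m (μ := (volume : Measure ℝ))
  have heq : (fun x : ℝ => (x - t)^2 * Real.exp (-(s/2) * (x - m)^2))
      = fun x : ℝ => ((x - m) + (m - t))^2 * Real.exp (-(s/2) * (x - m)^2) := by
    funext x; ring_nf
  rw [heq, hshift]
  have iadd : Integrable (fun y : ℝ => (2*(m-t)) * (y * Real.exp (-(s/2) * y^2))
      + (m - t)^2 * Real.exp (-(s/2) * y^2)) := (i1.const_mul _).add (i0.const_mul _)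
  have e2 : ∫ y : ℝ, (y + (m - t))^2 * Real.exp (-(s/2) * y^2)
      = ∫ y : ℝ, (y^2 * Real.exp (-(s/2) * y^2)
        + ((2*(m-t)) * (y * Real.exp (-(s/2) * y^2)) + (m - t)^2 * Real.exp (-(s/2) * y^2))) := by
    congr 1; funext y; ring
  have e3 : ∫ y : ℝ, (y^2 * Real.exp (-(s/2) * y^2)
        + ((2*(m-t)) * (y * Real.exp (-(s/2) * y^2)) + (m - t)^2 * Real.exp (-(s/2) * y^2)))
      = (∫ y : ℝ, y^2 * Real.exp (-(s/2) * y^2))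
        + ∫ y : ℝ, ((2*(m-t)) * (y * Real.exp (-(s/2) * y^2))
            + (m - t)^2 * Real.exp (-(s/2) * y^2)) := integral_add i2 iadd
  have e4 : ∫ y : ℝ, ((2*(m-t)) * (y * Real.exp (-(s/2) * y^2))
        + (m - t)^2 * Real.exp (-(s/2) * y^2))
      = (∫ y : ℝ, (2*(m-t)) * (y * Real.exp (-(s/2) * y^2)))
        + ∫ y : ℝ, (m - t)^2 * Real.exp (-(s/2) * y^2) :=
    integral_add (i1.const_mul _) (i0.const_mul _)
  rw [e2, e3, e4, integral_const_mul, integral_const_mul, gauss_i1, gauss_i0 s hs, gauss_i2 s hs]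
  ring

end Aux

/-- Isotropic Gaussian case: model `P_θ = N(θ, v²I_d)`, prior `π = N(0, σ²I_d)`.
For all `β ≥ 0`,
`β E_{π_{−β}}[KL(P_{θ₀}‖P_θ)] = (β/v²)‖θ₀‖²/(2σ⁴((β/v²)+1/σ²)²) + (β/v²)d/(2((β/v²)+1/σ²))`
and this is at most `d/2 + ‖θ₀‖²/(8σ²)`. -/
theorem gaussian_isotropic_localized_bound {d : ℕ} (v σ : ℝ) (hv : 0 < v) (hσ : 0 < σ)
    (β : ℝ) (hβ : 0 ≤ β) (θ₀ : Fin d → ℝ)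
    (K : (Fin d → ℝ) → ℝ)
    (hKdef : ∀ θ, K θ = (∑ i, (θ i - θ₀ i) ^ 2) / (2 * v ^ 2))
    (pr : Measure (Fin d → ℝ))
    (hpr : pr = volume.withDensity fun θ => ENNReal.ofReal
      ((2 * Real.pi * σ ^ 2) ^ (-(d : ℝ) / 2) * Real.exp (-(∑ i, (θ i) ^ 2) / (2 * σ ^ 2))))
    (Z : ℝ) (hZ : Z = ∫ θ, Real.exp (-β * K θ) ∂pr) (hZpos : 0 < Z)
    (prβ : Measure (Fin d → ℝ))
    (hprβ : prβ = pr.withDensity fun θ => ENNReal.ofReal (Real.exp (-β * K θ) / Z)) :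
    β * (∫ θ, K θ ∂prβ)
        = (β / v ^ 2) * (∑ i, (θ₀ i) ^ 2) / (2 * σ ^ 4 * ((β / v ^ 2) + 1 / σ ^ 2) ^ 2)
          + (β / v ^ 2) * d / (2 * ((β / v ^ 2) + 1 / σ ^ 2)) ∧
    β * (∫ θ, K θ ∂prβ) ≤ d / 2 + (∑ i, (θ₀ i) ^ 2) / (8 * σ ^ 2) := by
  -- notation
  set a : ℝ := β / v ^ 2 with ha_def
  set b : ℝ := 1 / σ ^ 2 with hb_def
  set s : ℝ := a + b with hs_def
  have ha : 0 ≤ a := by positivity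
  have hb : 0 < b := by positivity
  have hs : 0 < s := by positivity
  set m : Fin d → ℝ := fun i => a * θ₀ i / s with hm_def
  set G : Fin d → ℝ → ℝ := fun i x => Real.exp (-(s/2) * (x - m i)^2) with hG_def
  set C : ℝ := Real.exp (-(a*b/(2*s)) * ∑ i, (θ₀ i)^2) with hC_def
  set c : ℝ := (2 * Real.pi * σ ^ 2) ^ (-(d : ℝ) / 2) with hc_def
  have hcpos : 0 < c := Real.rpow_pos_of_pos (by positivity) _
  set I0 : ℝ := Real.sqrt (2*Real.pi/s) with hI0_def
  have hI0pos : 0 < I0 := Real.sqrt_pos.mpr (by positivity)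
  clear_value a b s m G C c I0
  -- pointwise identity

  have hpoint : ∀ θ : Fin d → ℝ,
      Real.exp (-β * K θ) * (c * Real.exp (-(∑ i, (θ i)^2) / (2 * σ ^ 2)))
        = c * (C * ∏ i, G i (θ i)) := by
    intro θ
    have key : (-β * K θ) + (-(∑ i, (θ i)^2) / (2 * σ ^ 2))
        = (-(a*b/(2*s)) * ∑ i, (θ₀ i)^2) + ∑ i, (-(s/2) * (θ i - m i)^2) := by
      rw [hKdef θ]
      have h1 : -β * ((∑ i, (θ i - θ₀ i)^2) / (2 * v ^ 2))
          = ∑ i, (-(a/2) * (θ i - θ₀ i)^2) := by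
        rw [← Finset.mul_sum, ha_def]
        ring
      have h2 : -(∑ i, (θ i)^2) / (2 * σ ^ 2) = ∑ i, (-(b/2) * (θ i)^2) := by
        rw [← Finset.mul_sum, hb_def]
        ring
      rw [h1, h2, ← Finset.sum_add_distrib, Finset.mul_sum, ← Finset.sum_add_distrib]
      refine Finset.sum_congr rfl fun i _ => ?_
      rw [hm_def]
      have hsne : s ≠ 0 := hs.ne'
      field_simp
      rw [hs_def]
      ring
    calc Real.exp (-β * K θ) * (c * Real.exp (-(∑ i, (θ i)^2) / (2 * σ ^ 2)))
        = c * Real.exp ((-β * K θ) + (-(∑ i, (θ i)^2) / (2 * σ ^ 2))) := by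
          rw [Real.exp_add]; ring
      _ = c * Real.exp ((-(a*b/(2*s)) * ∑ i, (θ₀ i)^2) + ∑ i, (-(s/2) * (θ i - m i)^2)) := by
          rw [key]
      _ = c * (C * ∏ i, G i (θ i)) := by
          rw [Real.exp_add, Real.exp_sum, hC_def]
          simp only [hG_def]
  -- reduction of pr-integrals to volume integrals

  have hpr_to_vol : ∀ f : (Fin d → ℝ) → ℝ,
      ∫ θ, f θ ∂pr
        = ∫ θ, (c * Real.exp (-(∑ i, (θ i)^2) / (2 * σ ^ 2))) * f θ := by
    intro f
    rw [hpr]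
    have hmeasR : Measurable fun θ : Fin d → ℝ =>
        c * Real.exp (-(∑ i, (θ i)^2) / (2 * σ ^ 2)) := by
      refine Measurable.const_mul (Measurable.exp ?_) c
      exact ((Finset.measurable_sum _ fun i _ =>
        (measurable_pi_apply i).pow_const 2).neg).div_const _
    have hco : (fun θ : Fin d → ℝ => ENNReal.ofReal
          (c * Real.exp (-(∑ i, (θ i)^2) / (2 * σ ^ 2))))
        = fun θ => ((Real.toNNReal (c * Real.exp (-(∑ i, (θ i)^2) / (2 * σ ^ 2))) : ℝ≥0)
            : ENNReal) := rfl
    rw [hco, integral_withDensity_eq_integral_smul hmeasR.real_toNNReal f]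
    refine integral_congr_ae (Filter.Eventually.of_forall fun θ => ?_)
    have hnn : 0 ≤ c * Real.exp (-(∑ i, (θ i)^2) / (2 * σ ^ 2)) := by positivity
    dsimp only
    rw [NNReal.smul_def, Real.coe_toNNReal _ hnn, smul_eq_mul]
  -- K is measurable
  have hKeq : K = fun θ : Fin d → ℝ => (∑ i, (θ i - θ₀ i) ^ 2) / (2 * v ^ 2) := funext hKdef
  have hKmeas : Measurable K := by
    rw [hKeq]
    exact (Finset.measurable_sum _ fun i _ =>
      ((measurable_pi_apply i).sub measurable_const).pow_const 2).div_const _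
  -- value of Z

  have hZval : Z = c * C * I0 ^ d := by
    rw [hZ, hpr_to_vol]
    calc ∫ θ : Fin d → ℝ, (c * Real.exp (-(∑ i, (θ i)^2) / (2 * σ ^ 2))) * Real.exp (-β * K θ)
        = ∫ θ : Fin d → ℝ, (c * C) * ∏ i, G i (θ i) := by
          congr 1; funext θ
          rw [mul_comm, hpoint θ]; ring
      _ = (c * C) * ∫ θ : Fin d → ℝ, ∏ i, G i (θ i) := integral_const_mul _ _
      _ = (c * C) * ∏ i : Fin d, ∫ x : ℝ, G i x := by
          rw [MeasureTheory.integral_fintype_prod_volume_eq_prod G]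
      _ = c * C * I0 ^ d := by
          have : ∀ i : Fin d, (∫ x : ℝ, G i x) = I0 := fun i => by
            rw [hG_def, hI0_def]; exact gauss_shift_i0 s (m i) hs
          rw [Finset.prod_congr rfl fun i _ => this i, Finset.prod_const, Finset.card_univ,
            Fintype.card_fin]
  -- value of the numerator

  have hNval : ∫ θ, K θ * Real.exp (-β * K θ) ∂pr
      = c * C * I0 ^ d * ((1 / (2 * v ^ 2)) * ∑ j, ((m j - θ₀ j)^2 + 1/s)) := by
    rw [hpr_to_vol]
    have hint : ∀ j : Fin d,
        Integrable (fun θ : Fin d → ℝ => (θ j - θ₀ j)^2 * ∏ i, G i (θ i)) ∧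
        (∫ θ : Fin d → ℝ, (θ j - θ₀ j)^2 * ∏ i, G i (θ i))
          = ((m j - θ₀ j)^2 + 1/s) * I0 ^ d := by
      intro j
      set fj : Fin d → ℝ → ℝ :=
        fun i x => if i = j then (x - θ₀ j)^2 * G j x else G i x with hfj_def
      have hFj : ∀ θ : Fin d → ℝ,
          (θ j - θ₀ j)^2 * ∏ i, G i (θ i) = ∏ i, fj i (θ i) := by
        intro θ
        calc (θ j - θ₀ j)^2 * ∏ i, G i (θ i)
            = ((θ j - θ₀ j)^2 * G j (θ j)) * ∏ i ∈ Finset.univ.erase j, G i (θ i) := by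
              rw [← Finset.mul_prod_erase Finset.univ (fun i => G i (θ i))
                (Finset.mem_univ j)]
              ring
          _ = fj j (θ j) * ∏ i ∈ Finset.univ.erase j, fj i (θ i) := by
              congr 1
              · rw [hfj_def]; simp
              · refine Finset.prod_congr rfl fun i hi => ?_
                rw [hfj_def]
                simp [Finset.ne_of_mem_erase hi]
          _ = ∏ i, fj i (θ i) :=
              Finset.mul_prod_erase Finset.univ (fun i => fj i (θ i)) (Finset.mem_univ j)
      have hfj_int : ∀ i, Integrable (fj i) := by
        intro i
        rw [hfj_def]
        by_cases h : i = j
        · simp only [if_pos h, hG_def]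
          exact gauss_shift_integrable2 s (m j) (θ₀ j) hs
        · simp only [if_neg h, hG_def]
          exact gauss_shift_integrable0 s (m i) hs
      have hfj_val : ∀ i : Fin d, (∫ x : ℝ, fj i x)
          = if i = j then ((m j - θ₀ j)^2 + 1/s) * I0 else I0 := by
        intro i
        by_cases h : i = j
        · simp only [hfj_def, if_pos h, hG_def, hI0_def]
          exact gauss_shift_i2 s (m j) (θ₀ j) hs
        · simp only [hfj_def, if_neg h, hG_def, hI0_def]
          exact gauss_shift_i0 s (m i) hs
      constructor
      · have : Integrable (fun θ : Fin d → ℝ => ∏ i, fj i (θ i)) :=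
          Integrable.fintype_prod hfj_int
        exact this.congr (Filter.Eventually.of_forall fun θ => (hFj θ).symm)
      · calc (∫ θ : Fin d → ℝ, (θ j - θ₀ j)^2 * ∏ i, G i (θ i))
            = ∫ θ : Fin d → ℝ, ∏ i, fj i (θ i) := by
              congr 1; funext θ; exact hFj θ
          _ = ∏ i : Fin d, ∫ x : ℝ, fj i x :=
              MeasureTheory.integral_fintype_prod_volume_eq_prod fj
          _ = ((m j - θ₀ j)^2 + 1/s) * I0 ^ d := by
              rw [Finset.prod_congr rfl fun i _ => hfj_val i,
                ← Finset.mul_prod_erase Finset.univ _ (Finset.mem_univ j), if_pos rfl]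
              have herase : ∏ i ∈ Finset.univ.erase j,
                  (if i = j then ((m j - θ₀ j)^2 + 1/s) * I0 else I0) =
                  ∏ i ∈ Finset.univ.erase j, I0 := by
                refine Finset.prod_congr rfl fun i hi => ?_
                rw [if_neg (Finset.ne_of_mem_erase hi)]
              rw [herase, mul_assoc,
                Finset.mul_prod_erase Finset.univ (fun _ => I0) (Finset.mem_univ j),
                Finset.prod_const, Finset.card_univ, Fintype.card_fin]
    calc ∫ θ : Fin d → ℝ, (c * Real.exp (-(∑ i, (θ i)^2) / (2 * σ ^ 2)))
            * (K θ * Real.exp (-β * K θ))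
        = ∫ θ : Fin d → ℝ, ((c * C) * (1 / (2 * v ^ 2)))
            * ∑ j, (θ j - θ₀ j)^2 * ∏ i, G i (θ i) := by
          congr 1; funext θ
          have h := hpoint θ
          calc (c * Real.exp (-(∑ i, (θ i)^2) / (2 * σ ^ 2))) * (K θ * Real.exp (-β * K θ))
              = K θ * (Real.exp (-β * K θ)
                  * (c * Real.exp (-(∑ i, (θ i)^2) / (2 * σ ^ 2)))) := by ring
            _ = K θ * (c * (C * ∏ i, G i (θ i))) := by rw [h]
            _ = ((c * C) * (1 / (2 * v ^ 2))) * ∑ j, (θ j - θ₀ j)^2 * ∏ i, G i (θ i) := by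
                rw [hKdef θ, ← Finset.sum_mul]
                ring
      _ = ((c * C) * (1 / (2 * v ^ 2)))
            * ∫ θ : Fin d → ℝ, ∑ j, (θ j - θ₀ j)^2 * ∏ i, G i (θ i) := integral_const_mul _ _
      _ = ((c * C) * (1 / (2 * v ^ 2)))
            * ∑ j, ∫ θ : Fin d → ℝ, (θ j - θ₀ j)^2 * ∏ i, G i (θ i) := by
          rw [integral_finset_sum Finset.univ fun j _ => (hint j).1]
      _ = c * C * I0 ^ d * ((1 / (2 * v ^ 2)) * ∑ j, ((m j - θ₀ j)^2 + 1/s)) := by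
          rw [Finset.sum_congr rfl fun j _ => (hint j).2, ← Finset.sum_mul]
          ring
  -- the posterior integral

  have hKint : ∫ θ, K θ ∂prβ = (1 / Z) * ∫ θ, K θ * Real.exp (-β * K θ) ∂pr := by
    rw [hprβ]
    have hmeasR : Measurable fun θ : Fin d → ℝ => Real.exp (-β * K θ) / Z :=
      ((hKmeas.const_mul (-β)).exp).div_const Z
    have hco : (fun θ : Fin d → ℝ => ENNReal.ofReal (Real.exp (-β * K θ) / Z))
        = fun θ => ((Real.toNNReal (Real.exp (-β * K θ) / Z) : ℝ≥0) : ENNReal) := rfl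
    rw [hco, integral_withDensity_eq_integral_smul hmeasR.real_toNNReal K]
    have hstep : ∫ θ, Real.toNNReal (Real.exp (-β * K θ) / Z) • K θ ∂pr
        = ∫ θ, (1 / Z) * (K θ * Real.exp (-β * K θ)) ∂pr := by
      refine integral_congr_ae (Filter.Eventually.of_forall fun θ => ?_)
      have hnn : 0 ≤ Real.exp (-β * K θ) / Z := by positivity
      dsimp only
      rw [NNReal.smul_def, Real.coe_toNNReal _ hnn, smul_eq_mul]
      ring
    rw [hstep, integral_const_mul]
  -- main value

  have hmain : β * (∫ θ, K θ ∂prβ)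
      = (a / 2) * ((b^2 * ∑ i, (θ₀ i)^2) / s^2 + d / s) := by
    have hsum : ∑ j, ((m j - θ₀ j)^2 + 1/s)
        = (b^2 * ∑ i, (θ₀ i)^2) / s^2 + d / s := by
      rw [Finset.sum_add_distrib, Finset.sum_const, Finset.card_univ, Fintype.card_fin]
      congr 1
      · rw [Finset.mul_sum, Finset.sum_div]
        refine Finset.sum_congr rfl fun j _ => ?_
        rw [hm_def]
        have hsne : s ≠ 0 := hs.ne'
        field_simp
        rw [hs_def]
        ring
      · rw [nsmul_eq_mul, mul_one_div]
    rw [hKint, hNval, hsum, ← hZval, ha_def]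
    have hZne : Z ≠ 0 := hZpos.ne'
    rw [show (1:ℝ)/Z = Z⁻¹ from one_div Z, inv_mul_cancel_left₀ hZne]
    ring
  constructor
  · rw [hmain]
    have hσ2 : σ ^ 2 ≠ 0 := by positivity
    have hb2 : b = 1 / σ ^ 2 := hb_def
    rw [hb2]
    field_simp
  · rw [hmain]
    have hT : (0:ℝ) ≤ ∑ i, (θ₀ i)^2 := Finset.sum_nonneg fun i _ => sq_nonneg _
    have hd0 : (0:ℝ) ≤ d := Nat.cast_nonneg d
    have hab : a * b / s ^ 2 ≤ 1 / 4 := by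
      rw [div_le_iff₀ (by positivity), hs_def]
      nlinarith [sq_nonneg (a - b)]
    have has : a / s ≤ 1 := by
      rw [div_le_one hs, hs_def]; linarith
    have hrhs : (∑ i, (θ₀ i)^2) / (8 * σ ^ 2) = b * (∑ i, (θ₀ i)^2) / 8 := by
      rw [hb_def]; ring
    rw [hrhs]
    have key : a / 2 * ((b^2 * ∑ i, (θ₀ i)^2) / s^2 + (d : ℝ) / s)
        = (a * b / s ^ 2) * (b * (∑ i, (θ₀ i)^2) / 2) + (a / s) * ((d : ℝ) / 2) := by
      ring
    rw [key]
    have t1 : (a * b / s ^ 2) * (b * (∑ i, (θ₀ i)^2) / 2)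
        ≤ (1 / 4) * (b * (∑ i, (θ₀ i)^2) / 2) :=
      mul_le_mul_of_nonneg_right hab
        (div_nonneg (mul_nonneg hb.le hT) (by norm_num))
    have t2 : (a / s) * ((d : ℝ) / 2) ≤ 1 * ((d : ℝ) / 2) :=
      mul_le_mul_of_nonneg_right has (div_nonneg hd0 (by norm_num))
    linarith
end
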